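/- Let R > 0 and μ > 0. Define R_i : [0, π/2) → ℝ by R_i(u) = R/μ + √((S(u) − r(u))²·(S(u) − l(u)) / S(u)), where r(u) = R/cos u, l(u) = 2·R·tan u, S(u) = (2·r(u) + l(u))/2. Then the arc-length-based controller input γ_s(u) = 1 / R_i(u) is strictly monotonically decreasing on [0, π/2). In particular, γ_s(u) ≤ μ/R for all u ∈ [0, π/2). -/

import Mathlib

open Real

/-- The varying curvature radius of the geometric controller (Eq. (12)). -/
noncomputable def Ri (R μ : ℝ) (u : ℝ) : ℝ :=
  let r := R / Real.cos u
  let l := 2 * R * Real.tan u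
  let S := (2 * r + l) / 2
  R / μ + Real.sqrt ((S - r) ^ 2 * (S - l) / S)

/-- The arc-length-based normal-curvature controller input (Eq. (13)). -/
noncomputable def γs (R μ : ℝ) (u : ℝ) : ℝ := 1 / Ri R μ u

lemma Ri_eq (R μ : ℝ) (hR : 0 < R) {u : ℝ} (hu : u ∈ Set.Ico 0 (π / 2)) :
    Ri R μ u = R / μ + R * (Real.sin u / (1 + Real.sin u)) := by
  obtain ⟨h0, h2⟩ := hu
  have hc : 0 < Real.cos u := Real.cos_pos_of_mem_Ioo ⟨by linarith [Real.pi_pos], h2⟩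
  have hs : 0 ≤ Real.sin u := Real.sin_nonneg_of_nonneg_of_le_pi h0 (by linarith [Real.pi_pos])
  have h1s : (0:ℝ) < 1 + Real.sin u := by linarith
  have hcs : Real.cos u ^ 2 = (1 - Real.sin u) * (1 + Real.sin u) := by
    nlinarith [Real.sin_sq_add_cos_sq u]
  have hsqR : Real.sqrt R ^ 2 = R := Real.sq_sqrt hR.le
  simp only [Ri, Real.tan_eq_sin_div_cos]
  congr 1
  have e1 : (2 * (R / Real.cos u) + 2 * R * (Real.sin u / Real.cos u)) / 2
      = R * (1 + Real.sin u) / Real.cos u := by field_simp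
  rw [e1]
  have e2 : R * (1 + Real.sin u) / Real.cos u - R / Real.cos u
      = R * Real.sin u / Real.cos u := by field_simp; ring
  have e3 : R * (1 + Real.sin u) / Real.cos u - 2 * R * (Real.sin u / Real.cos u)
      = R * (1 - Real.sin u) / Real.cos u := by field_simp; ring
  rw [e2, e3]
  have harg : (R * Real.sin u / Real.cos u) ^ 2 * (R * (1 - Real.sin u) / Real.cos u) /
        (R * (1 + Real.sin u) / Real.cos u) =
      (R * (Real.sin u / (1 + Real.sin u))) ^ 2 := by
    rw [mul_pow]
    rw [div_eq_iff (by positivity)]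
    field_simp
    linear_combination (-(Real.sin u ^ 2)) * hcs
  rw [harg, Real.sqrt_sq (by positivity)]

/-- **Remark 1:** larger steering angles make `γ_s = 1/R_i` strictly smaller,
and `γ_s(u) ≤ μ/R` for all `u ∈ [0, π/2)`. -/
theorem γs_strictAntiOn_and_bounded (R μ : ℝ) (hR : 0 < R) (hμ : 0 < μ) :
    StrictAntiOn (γs R μ) (Set.Ico 0 (π / 2)) ∧
      ∀ u ∈ Set.Ico 0 (π / 2), γs R μ u ≤ μ / R := by
  have hRpos : ∀ u ∈ Set.Ico 0 (π / 2), R / μ ≤ Ri R μ u := by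
    intro u hu
    rw [Ri_eq R μ hR hu]
    have hs : 0 ≤ Real.sin u :=
      Real.sin_nonneg_of_nonneg_of_le_pi hu.1 (by linarith [Real.pi_pos, hu.2])
    have : 0 ≤ R * (Real.sin u / (1 + Real.sin u)) := by positivity
    linarith
  have hRi0 : ∀ u ∈ Set.Ico 0 (π / 2), 0 < Ri R μ u := by
    intro u hu
    have := hRpos u hu
    have : 0 < R / μ := by positivity
    linarith [hRpos u hu]
  have hmono : ∀ a ∈ Set.Ico 0 (π / 2), ∀ b ∈ Set.Ico 0 (π / 2), a < b →
      Ri R μ a < Ri R μ b := by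
    intro a ha b hb hab
    rw [Ri_eq R μ hR ha, Ri_eq R μ hR hb]
    have hsab : Real.sin a < Real.sin b := by
      apply Real.strictMonoOn_sin ⟨by linarith [ha.1, Real.pi_pos], by linarith [ha.2]⟩
        ⟨by linarith [hb.1, Real.pi_pos], hb.2.le⟩ hab
    have hsa : 0 ≤ Real.sin a :=
      Real.sin_nonneg_of_nonneg_of_le_pi ha.1 (by linarith [Real.pi_pos, ha.2])
    have h1a : (0:ℝ) < 1 + Real.sin a := by linarith
    have h1b : (0:ℝ) < 1 + Real.sin b := by linarith
    have hfrac : Real.sin a / (1 + Real.sin a) < Real.sin b / (1 + Real.sin b) := by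
      rw [div_lt_div_iff₀ h1a h1b]; nlinarith
    have hRR : 0 < R := hR
    have := mul_lt_mul_of_pos_left hfrac hRR
    linarith
  constructor
  · intro a ha b hb hab
    have h1 := hRi0 a ha
    have h2 := hRi0 b hb
    simp only [γs]
    rw [div_lt_div_iff₀ h2 h1]
    have := hmono a ha b hb hab
    linarith
  · intro u hu
    have h1 := hRi0 u hu
    have h2 := hRpos u hu
    simp only [γs]
    rw [div_le_div_iff₀ h1 hR]
    have : 0 < R / μ := by positivity
    have h3 : μ * (R / μ) = R := by field_simp
    have h4 := mul_le_mul_of_nonneg_left h2 hμ.le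
    linarith
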